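/- Let f : Λ₊ → ℂ be discrete analytic on Λ₊. Then pointwise on Λ₊: (I+α₋δ_x)((I+α₊δ_y)f) = f and (I+α₊δ_y)((I+α₋δ_x)f) = f; and (I+α₊δ_x)f = (I+δ_y)((I+α₋δ_x)f). Moreover each of the maps f ↦ (I+δ_y)f, f ↦ (I+α₊δ_y)f, f ↦ (I+α₊δ_x)f, f ↦ (I+α₋δ_x)f is a bijection of the space of ℂ-valued discrete analytic functions on Λ₊ onto itself. -/

import Mathlib

open Complex

noncomputable section

/-- The Gaussian integer lattice Λ = ℤ + iℤ. -/
abbrev GI := GaussianInt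

/-- The lattice element i. -/
def Ii : GI := ⟨0, 1⟩

/-- The right half-lattice Λ₊ = {z ∈ Λ : Re z ≥ 0}. -/
def Lp := {z : GI // 0 ≤ z.re}

/-- The point 0 of Λ₊. -/
def pt0 : Lp := ⟨0, le_refl 0⟩

/-- The shift z ↦ z + 1 on Λ₊. -/
def shx (z : Lp) : Lp := ⟨z.1 + 1, by have := z.2; simp [Zsqrtd.re_add]; omega⟩

/-- The shift z ↦ z + i on Λ₊. -/
def shy (z : Lp) : Lp := ⟨z.1 + Ii, by have := z.2; simp [Zsqrtd.re_add, Ii]; omega⟩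

/-- α₊ = (1+i)/2. -/
def ap : ℂ := (1 + I) / 2

/-- α₋ = (1−i)/2. -/
def am : ℂ := (1 - I) / 2

/-- The difference operator δ_x on functions on Λ₊. -/
def dxp (f : Lp → ℂ) : Lp → ℂ := fun z => f (shx z) - f z

/-- The difference operator δ_y on functions on Λ₊. -/
def dyp (f : Lp → ℂ) : Lp → ℂ := fun z => f (shy z) - f z

/-- Discrete analyticity on the right half-lattice Λ₊. -/
def DAp (f : Lp → ℂ) : Prop :=
  ∀ z : Lp, (f (shx (shy z)) - f z) / (1 + I) = (f (shx z) - f (shy z)) / (1 - I)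

/-- `T` is a bijection of the space of ℂ-valued discrete analytic functions on Λ₊
onto itself. -/
def BijOnDAp (T : (Lp → ℂ) → (Lp → ℂ)) : Prop :=
  (∀ g, DAp g → DAp (T g)) ∧ ∀ h, DAp h → ∃! g : Lp → ℂ, DAp g ∧ T g = h

/-- for discrete analytic f on Λ₊, pointwise
`(I+α₋δ_x)((I+α₊δ_y)f) = f`, `(I+α₊δ_y)((I+α₋δ_x)f) = f`, and
`(I+α₊δ_x)f = (I+δ_y)((I+α₋δ_x)f)`; and the operators `I+δ_y`, `I+α₊δ_y`,
`I+α₊δ_x`, `I+α₋δ_x` are bijections of the space of discrete analytic functions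
on Λ₊ onto itself. -/


lemma shy_shx (z : Lp) : shy (shx z) = shx (shy z) := by
  apply Subtype.ext; simp only [shx, shy]; ring

def syi (z : Lp) : Lp := ⟨z.1 - Ii, by have := z.2; simp [Zsqrtd.re_sub, Ii]; omega⟩

lemma shy_syi (z : Lp) : shy (syi z) = z := by
  apply Subtype.ext; simp only [shy, syi]; ring

lemma syi_shy (z : Lp) : syi (shy z) = z := by
  apply Subtype.ext; simp only [shy, syi]; ring

lemma syi_shx (z : Lp) : syi (shx z) = shx (syi z) := by
  apply Subtype.ext; simp only [shx, syi]; ring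

lemma one_add_I_ne : (1 + I) ≠ 0 := by
  intro h; have := congrArg Complex.im h; simp at this

lemma one_sub_I_ne : (1 - I) ≠ 0 := by
  intro h; have := congrArg Complex.im h; simp at this

lemma da_eq {f : Lp → ℂ} (hf : DAp f) (z : Lp) :
    f (shx (shy z)) = f z + I * (f (shx z) - f (shy z)) := by
  have h := hf z
  rw [div_eq_div_iff one_add_I_ne one_sub_I_ne] at h
  linear_combination ((1+I)/2) * h +
    ((f (shx (shy z)) - f z + f (shx z) - f (shy z))/2) * Complex.I_sq

lemma DAp_comb {f g : Lp → ℂ} (c : ℂ) (hf : DAp f) (hg : DAp g) :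
    DAp (fun z => f z + c * g z) := by
  intro z; have h1 := hf z; have h2 := hg z
  simp only []
  linear_combination h1 + c * h2

lemma DAp_dxp {f : Lp → ℂ} (hf : DAp f) : DAp (dxp f) := by
  intro z
  have h1 := hf z; have h2 := hf (shx z)
  simp only [dxp, shy_shx] at h2 ⊢
  linear_combination h2 - h1

lemma DAp_dyp {f : Lp → ℂ} (hf : DAp f) : DAp (dyp f) := by
  intro z
  have h1 := hf z; have h2 := hf (shy z)
  simp only [dyp, shy_shx] at h2 ⊢
  linear_combination h2 - h1

lemma DAp_syi {f : Lp → ℂ} (hf : DAp f) : DAp (fun z => f (syi z)) := by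
  intro z
  have h := hf (syi z)
  simp only [syi_shx, syi_shy, shy_syi] at h ⊢
  linear_combination h

lemma id1 {f : Lp → ℂ} (hf : DAp f) (z : Lp) :
    (fun w => f w + ap * dyp f w) z + am * dxp (fun w => f w + ap * dyp f w) z = f z := by
  have h := da_eq hf z
  simp only [dxp, dyp, shy_shx, ap, am]
  linear_combination ((1-I)/2 * ((1+I)/2)) * h + (-(f z)/2 + (1+I)/4 * f (shy z) + (1-I)/4 * f (shx z)) * Complex.I_sq

lemma id2 {f : Lp → ℂ} (hf : DAp f) (z : Lp) :
    (fun w => f w + am * dxp f w) z + ap * dyp (fun w => f w + am * dxp f w) z = f z := by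
  have h := da_eq hf z
  simp only [dxp, dyp, shy_shx, ap, am]
  linear_combination ((1-I)/2 * ((1+I)/2)) * h + (-(f z)/2 + (1+I)/4 * f (shy z) + (1-I)/4 * f (shx z)) * Complex.I_sq

lemma id3 {f : Lp → ℂ} (hf : DAp f) (z : Lp) :
    f z + ap * dxp f z
      = (fun w => f w + am * dxp f w) z + dyp (fun w => f w + am * dxp f w) z := by
  have h := da_eq hf z
  simp only [dxp, dyp, shy_shx, ap, am]
  linear_combination (-(1-I)/2) * h + ((f (shx z) - f (shy z))/2) * Complex.I_sq

lemma DAp_T1 {g : Lp → ℂ} (hg : DAp g) : DAp (fun z => g z + dyp g z) := by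
  intro z
  have h := hg (shy z)
  simp only [dyp, shy_shx] at h ⊢
  linear_combination h

lemma bij1 : BijOnDAp (fun g z => g z + dyp g z) := by
  constructor
  · exact fun g hg => DAp_T1 hg
  · intro h hh
    refine ⟨fun z => h (syi z), ⟨DAp_syi hh, ?_⟩, ?_⟩
    · funext z
      simp only [dyp, syi_shy]
      ring
    · rintro g' ⟨hg', hT⟩
      funext z
      have hz := congrFun hT (syi z)
      simp only [dyp, shy_syi] at hz
      linear_combination hz

lemma bij2 : BijOnDAp (fun g z => g z + ap * dyp g z) := by
  constructor
  · exact fun g hg => DAp_comb ap hg (DAp_dyp hg)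
  · intro h hh
    refine ⟨fun z => h z + am * dxp h z, ⟨DAp_comb am hh (DAp_dxp hh), ?_⟩, ?_⟩
    · funext z
      exact id2 hh z
    · rintro g' ⟨hg', hT⟩
      funext z
      have hT2 : (fun z => g' z + ap * dyp g' z) = h := hT
      have h1 := id1 hg' z
      rw [hT2] at h1
      linear_combination -h1

lemma bij4 : BijOnDAp (fun g z => g z + am * dxp g z) := by
  constructor
  · exact fun g hg => DAp_comb am hg (DAp_dxp hg)
  · intro h hh
    refine ⟨fun z => h z + ap * dyp h z, ⟨DAp_comb ap hh (DAp_dyp hh), ?_⟩, ?_⟩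
    · funext z
      exact id1 hh z
    · rintro g' ⟨hg', hT⟩
      funext z
      have hT2 : (fun z => g' z + am * dxp g' z) = h := hT
      have h2 := id2 hg' z
      rw [hT2] at h2
      linear_combination -h2

lemma bij3 : BijOnDAp (fun g z => g z + ap * dxp g z) := by
  constructor
  · exact fun g hg => DAp_comb ap hg (DAp_dxp hg)
  · intro h hh
    have hF : DAp (fun w => h (syi w)) := DAp_syi hh
    have hg : DAp (fun z => (fun w => h (syi w)) z + ap * dyp (fun w => h (syi w)) z) :=
      DAp_comb ap hF (DAp_dyp hF)
    refine ⟨fun z => (fun w => h (syi w)) z + ap * dyp (fun w => h (syi w)) z, ⟨hg, ?_⟩, ?_⟩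
    · funext z
      have hA : (fun w =>
          (fun z => (fun w => h (syi w)) z + ap * dyp (fun w => h (syi w)) z) w
            + am * dxp (fun z => (fun w => h (syi w)) z + ap * dyp (fun w => h (syi w)) z) w)
          = (fun w => h (syi w)) := funext fun w => id1 hF w
      have h3 := id3 hg z
      rw [hA] at h3
      simp only [dyp, syi_shy] at h3 ⊢
      linear_combination h3
    · rintro g' ⟨hg', hT⟩
      have hu : ∀ w, (fun w => g' w + am * dxp g' w) w = h (syi w) := by
        intro w
        have h3 := id3 hg' (syi w)
        have hT' := congrFun hT (syi w)
        simp only [dyp, shy_syi] at h3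
        linear_combination hT' - h3
      funext z
      have h2 := id2 hg' z
      simp only [dyp] at h2 ⊢
      linear_combination -h2 + (1 - ap) * hu z + ap * hu (shy z)

theorem stmt10 (f : Lp → ℂ) (hf : DAp f) :
    (∀ z : Lp,
      (fun w => f w + ap * dyp f w) z + am * dxp (fun w => f w + ap * dyp f w) z
        = f z) ∧
    (∀ z : Lp,
      (fun w => f w + am * dxp f w) z + ap * dyp (fun w => f w + am * dxp f w) z
        = f z) ∧
    (∀ z : Lp,
      f z + ap * dxp f z
        = (fun w => f w + am * dxp f w) z + dyp (fun w => f w + am * dxp f w) z) ∧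
    BijOnDAp (fun g z => g z + dyp g z) ∧
    BijOnDAp (fun g z => g z + ap * dyp g z) ∧
    BijOnDAp (fun g z => g z + ap * dxp g z) ∧
    BijOnDAp (fun g z => g z + am * dxp g z) := by
  exact ⟨id1 hf, id2 hf, id3 hf, bij1, bij2, bij3, bij4⟩
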